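/- Let d, s, m ≥ 1 be integers. Let v_1, ..., v_s ∈ ℝ^{d+1} and q_1, ..., q_m ∈ ℝ^{d+1} be vectors, let z_1, ..., z_m ∈ ℝ^s (write z_{ℓ,j} for the j-th coordinate of z_ℓ), and let a_1, ..., a_m be nonnegative real numbers. Suppose that: (i) for every ℓ ∈ {1, ..., m}, Σ_{j=1}^s z_{ℓ,j} ⟨v_j, q_ℓ⟩ > 0; and (ii) for every j ∈ {1, ..., s}, Σ_{ℓ=1}^m a_ℓ z_{ℓ,j} = 0 and Σ_{ℓ=1}^m a_ℓ z_{ℓ,j} q_ℓ = 0 in ℝ^{d+1}. Then a_ℓ = 0 for all ℓ ∈ {1, ..., m}. -/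
import Mathlib


open scoped RealInnerProductSpace

/-- The key implication (condition (c₂) implies condition (c₁)) from the proof of
Lemma 4.1 of the paper, real case: if each point `q ℓ` has positive pairing
`∑ j, z ℓ j * ⟪v j, q ℓ⟫` and the nonnegative coefficients `a ℓ` produce, for every
`j`, an affine dependency `∑ ℓ, a ℓ * z ℓ j = 0`, `∑ ℓ, (a ℓ * z ℓ j) • q ℓ = 0`,
then all the `a ℓ` vanish. -/
theorem c2_implies_c1 (d s m : ℕ) (hd : 1 ≤ d) (hs : 1 ≤ s) (hm : 1 ≤ m)
    (v : Fin s → EuclideanSpace ℝ (Fin (d + 1)))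
    (q : Fin m → EuclideanSpace ℝ (Fin (d + 1)))
    (z : Fin m → Fin s → ℝ) (a : Fin m → ℝ) (ha : ∀ ℓ, 0 ≤ a ℓ)
    (h1 : ∀ ℓ, 0 < ∑ j, z ℓ j * ⟪v j, q ℓ⟫)
    (h2 : ∀ j, ∑ ℓ, a ℓ * z ℓ j = 0)
    (h3 : ∀ j, ∑ ℓ, (a ℓ * z ℓ j) • q ℓ = 0) :
    ∀ ℓ, a ℓ = 0 := by
  have key : ∑ ℓ, a ℓ * ∑ j, z ℓ j * ⟪v j, q ℓ⟫ = 0 := by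
    have : ∑ ℓ, a ℓ * ∑ j, z ℓ j * ⟪v j, q ℓ⟫
        = ∑ j, ⟪v j, ∑ ℓ, (a ℓ * z ℓ j) • q ℓ⟫ := by
      simp_rw [inner_sum, inner_smul_right, Finset.mul_sum]
      rw [Finset.sum_comm]
      congr 1; ext ℓ; congr 1; ext j; ring
    rw [this]
    simp [h3]
  have hterm : ∀ ℓ ∈ Finset.univ, 0 ≤ a ℓ * ∑ j, z ℓ j * ⟪v j, q ℓ⟫ :=
    fun ℓ _ => mul_nonneg (ha ℓ) (h1 ℓ).le
  intro ℓ
  have := (Finset.sum_eq_zero_iff_of_nonneg hterm).mp key ℓ (Finset.mem_univ ℓ)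
  rcases mul_eq_zero.mp this with h | h
  · exact h
  · exact absurd h (h1 ℓ).ne'
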